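/- Let n ≥ 3 and let s, t ∈ {-1,1}^n with s ≠ t and ♯_n(s) = ♯_n(t). Assume s begins with (1,-1), t begins with (-1,1), and Σ_{k=1}^n s_k ♯_k(s) > Σ_{k=1}^n t_k ♯_k(t). Then the algebraic curve c_{s,t} = {(x,y) ∈ ℝ² : Σ_{k=1}^n (s_k x^{♯_k(s)} y^{♯̃_k(s)} - t_k x^{♯_k(t)} y^{♯̃_k(t)}) = 0} intersects the open region R = {(x,y) ∈ (0,1)² : x + y > 1}. -/

import Mathlib

open Classical

/-- number of entries equal to 1 among the first `k` entries of `r` -/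
noncomputable def sharp (r : ℕ → ℝ) (k : ℕ) : ℕ :=
  ((Finset.range k).filter (fun i => r i = 1)).card

-- aux: sum of ±1 sequence
lemma sum_pm (n : ℕ) (r : ℕ → ℝ) (hr : ∀ k < n, r k = 1 ∨ r k = -1) :
    ∑ k ∈ Finset.range n, r k = 2 * (sharp r n : ℝ) - n := by
  have h : ∀ k ∈ Finset.range n, r k = 2 * (if r k = 1 then (1:ℝ) else 0) - 1 := by
    intro k hk
    rcases hr k (Finset.mem_range.mp hk) with h | h <;> norm_num [h]
  rw [Finset.sum_congr rfl h, Finset.sum_sub_distrib, Finset.sum_const, ← Finset.mul_sum,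
    Finset.sum_boole]
  simp [sharp]

lemma sharp_s_pos (s : ℕ → ℝ) (hs0 : s 0 = 1) (k : ℕ) (hk : 0 < k) : 1 ≤ sharp s k := by
  apply Finset.card_pos.mpr
  exact ⟨0, by simp [Finset.mem_filter, hs0, hk]⟩

lemma sharp_t_zero (t : ℕ → ℝ) (ht0 : t 0 = -1) : sharp t 1 = 0 := by
  simp [sharp, Finset.range_one, Finset.filter_singleton, ht0]
  norm_num

lemma sharp_t_pos (t : ℕ → ℝ) (ht1 : t 1 = 1) (k : ℕ) (hk : 2 ≤ k) :
    1 ≤ sharp t k := by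
  apply Finset.card_pos.mpr
  exact ⟨1, by simp [Finset.mem_filter, ht1]; omega⟩

theorem curve_meets_region (n : ℕ) (hn : 3 ≤ n) (s t : ℕ → ℝ)
    (hs : ∀ k < n, s k = 1 ∨ s k = -1) (ht : ∀ k < n, t k = 1 ∨ t k = -1)
    (hne : ∃ k < n, s k ≠ t k) (hsharp : sharp s n = sharp t n)
    (hs0 : s 0 = 1) (hs1 : s 1 = -1) (ht0 : t 0 = -1) (ht1 : t 1 = 1)
    (hslope : ∑ k ∈ Finset.range n, t k * (sharp t (k + 1) : ℝ) <
      ∑ k ∈ Finset.range n, s k * (sharp s (k + 1) : ℝ)) :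
    ∃ x y : ℝ, x ∈ Set.Ioo (0:ℝ) 1 ∧ y ∈ Set.Ioo (0:ℝ) 1 ∧ 1 < x + y ∧
      ∑ k ∈ Finset.range n,
        (s k * x ^ (sharp s (k + 1)) * y ^ ((k + 1) - sharp s (k + 1)) -
          t k * x ^ (sharp t (k + 1)) * y ^ ((k + 1) - sharp t (k + 1))) = 0 := by
  set F : ℝ → ℝ → ℝ := fun x y => ∑ k ∈ Finset.range n,
      (s k * x ^ (sharp s (k + 1)) * y ^ ((k + 1) - sharp s (k + 1)) -
        t k * x ^ (sharp t (k + 1)) * y ^ ((k + 1) - sharp t (k + 1))) with hF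
  set f : ℝ → ℝ := fun x => ∑ k ∈ Finset.range n,
      (s k * x ^ (sharp s (k + 1)) - t k * x ^ (sharp t (k + 1))) with hf
  have hFcont : Continuous (fun p : ℝ × ℝ => F p.1 p.2) := by
    rw [hF]
    apply continuous_finset_sum
    intro i _
    fun_prop
  have hfcont : Continuous f := by
    rw [hf]
    apply continuous_finset_sum
    intro i _
    fun_prop
  have hF1 : ∀ x, F x 1 = f x := by intro x; simp [hF, hf]
  -- f 0 = 1
  have h0n : (0:ℕ) < n := by omega
  have hf0 : f 0 = 1 := by
    have : f 0 = ∑ k ∈ Finset.range n,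
        (s k * (0:ℝ) ^ (sharp s (k + 1)) - t k * (0:ℝ) ^ (sharp t (k + 1))) := rfl
    rw [this, Finset.sum_eq_single_of_mem 0 (Finset.mem_range.mpr h0n)]
    · have h1 : sharp s 1 ≠ 0 := by have := sharp_s_pos s hs0 1 (by omega); omega
      have h2 : sharp t 1 = 0 := sharp_t_zero t ht0
      simp [zero_pow h1, h2, ht0]
    · intro k hk hk0
      have h1 : sharp s (k+1) ≠ 0 := by have := sharp_s_pos s hs0 (k+1) (by omega); omega
      have h2 : sharp t (k+1) ≠ 0 := by
        have := sharp_t_pos t ht1 (k+1) (by omega); omega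
      simp [zero_pow h1, zero_pow h2]
  -- f 1 = 0
  have hf1 : f 1 = 0 := by
    have : f 1 = ∑ k ∈ Finset.range n,
        (s k * (1:ℝ) ^ (sharp s (k + 1)) - t k * (1:ℝ) ^ (sharp t (k + 1))) := rfl
    rw [this]
    simp only [one_pow, mul_one]
    rw [Finset.sum_sub_distrib, sum_pm n s hs, sum_pm n t ht, hsharp]
    ring
  -- derivative at 1
  set D : ℝ := ∑ k ∈ Finset.range n,
      (s k * (sharp s (k + 1) : ℝ) - t k * (sharp t (k + 1) : ℝ)) with hD
  have hDpos : 0 < D := by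
    rw [hD, Finset.sum_sub_distrib]
    linarith
  have hderiv : HasDerivAt f D 1 := by
    have h : HasDerivAt f (∑ k ∈ Finset.range n,
        (s k * ((sharp s (k+1)) * (1:ℝ) ^ (sharp s (k+1) - 1)) -
         t k * ((sharp t (k+1)) * (1:ℝ) ^ (sharp t (k+1) - 1)))) 1 := by
      apply HasDerivAt.fun_sum
      intro k _
      exact ((hasDerivAt_pow (sharp s (k+1)) 1).const_mul (s k)).sub
        ((hasDerivAt_pow (sharp t (k+1)) 1).const_mul (t k))
    simpa [hD] using h
  -- find b ∈ (0,1) with f b < 0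
  have hslopetend : Filter.Tendsto (slope f 1) (nhdsWithin 1 {(1:ℝ)}ᶜ) (nhds D) :=
    hasDerivAt_iff_tendsto_slope.mp hderiv
  have h2 : ∀ᶠ x in nhdsWithin 1 {(1:ℝ)}ᶜ, 0 < slope f 1 x :=
    hslopetend.eventually (eventually_gt_nhds hDpos)
  have h3 : ∀ᶠ x in nhdsWithin (1:ℝ) (Set.Iio 1), 0 < slope f 1 x :=
    h2.filter_mono (nhdsWithin_mono 1 (fun x hx => ne_of_lt hx))
  have h4 : ∀ᶠ x in nhdsWithin (1:ℝ) (Set.Iio 1), x ∈ Set.Ioo (0:ℝ) 1 :=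
    Filter.eventually_of_mem (Ioo_mem_nhdsLT_of_mem (by norm_num : (1:ℝ) ∈ Set.Ioc 0 1)) (fun x hx => hx)
  obtain ⟨b, hbslope, hbmem⟩ := (h3.and h4).exists
  have hfb : f b < 0 := by
    have hb1 : b - 1 < 0 := by linarith [hbmem.2]
    have : slope f 1 b = f b / (b - 1) := by
      simp [slope, hf1, div_eq_inv_mul]
    rw [this] at hbslope
    rcases div_pos_iff.mp hbslope with ⟨h, h'⟩ | ⟨h, h'⟩
    · linarith
    · exact h
  -- find a ∈ (0, b) with f a > 0
  have hfapos : ∀ᶠ x in nhds (0:ℝ), 0 < f x :=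
    (hfcont.continuousAt).eventually (by rw [hf0] at *; exact eventually_gt_nhds one_pos)
  have hfapos' : ∀ᶠ x in nhdsWithin (0:ℝ) (Set.Ioi 0), 0 < f x :=
    hfapos.filter_mono nhdsWithin_le_nhds
  have hIoo : ∀ᶠ x in nhdsWithin (0:ℝ) (Set.Ioi 0), x ∈ Set.Ioo (0:ℝ) b :=
    Filter.eventually_of_mem (Ioo_mem_nhdsGT_of_mem (by constructor <;> [exact le_refl 0; exact hbmem.1])) (fun x hx => hx)
  obtain ⟨a, hfa, hamem⟩ := (hfapos'.and hIoo).exists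
  -- pick y close to 1
  have hcFa : Continuous (fun y => F a y) :=
    hFcont.comp (Continuous.prodMk_right a)
  have hcFb : Continuous (fun y => F b y) :=
    hFcont.comp (Continuous.prodMk_right b)
  have ha1 : (0:ℝ) < F a 1 := by rw [hF1]; exact hfa
  have hb1' : F b 1 < 0 := by rw [hF1]; exact hfb
  have hya : ∀ᶠ y in nhds (1:ℝ), 0 < F a y :=
    hcFa.continuousAt.eventually (eventually_gt_nhds ha1)
  have hyb : ∀ᶠ y in nhds (1:ℝ), F b y < 0 :=
    hcFb.continuousAt.eventually (eventually_lt_nhds hb1')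
  have hyI : ∀ᶠ y in nhdsWithin (1:ℝ) (Set.Iio 1), y ∈ Set.Ioo (1 - a) 1 :=
    Filter.eventually_of_mem (Ioo_mem_nhdsLT_of_mem
      (by constructor <;> [linarith [hamem.1]; exact le_refl 1])) (fun y hy => hy)
  obtain ⟨y, ⟨hya', hyb'⟩, hymem⟩ :=
    (((hya.filter_mono nhdsWithin_le_nhds).and (hyb.filter_mono nhdsWithin_le_nhds)).and hyI).exists
  -- IVT
  have hab : a ≤ b := le_of_lt hamem.2
  have hcg : ContinuousOn (fun x => F x y) (Set.Icc a b) :=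
    (hFcont.comp (continuous_id.prodMk continuous_const)).continuousOn
  have hiv := intermediate_value_Ioo' hab hcg
  have h0mem : (0:ℝ) ∈ Set.Ioo (F b y) (F a y) := ⟨hyb', hya'⟩
  obtain ⟨x, hxmem, hxval⟩ := hiv h0mem
  refine ⟨x, y, ⟨?_, ?_⟩, ⟨?_, hymem.2⟩, ?_, ?_⟩
  · linarith [hamem.1, hxmem.1]
  · linarith [hbmem.2, hxmem.2]
  · linarith [hamem.1, hamem.2, hbmem.2, hymem.1]
  · linarith [hxmem.1, hymem.1]
  · exact hxval
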